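/- Let g₁ : ℝ² → ℂ satisfy g₁(x+m, y+n) = (−1)^{mn} e^{πi(nx − my)} g₁(x,y) for all (m,n) ∈ ℤ²; let g₂ : ℝ⁴ → ℂ satisfy g₂(s+m₁, t+n₁, x+m₂, y+n₂) = (−1)^{m₁n₁+m₂n₂} e^{πi(n₁s − m₁t + n₂x − m₂y)} g₂(s,t,x,y) for all (m₁,n₁,m₂,n₂) ∈ ℤ⁴; and let g₃ : ℝ⁴ → ℂ satisfy the conjugate relation g₃(s+m₁, t+n₁, x+m₂, y+n₂) = (−1)^{m₁n₁+m₂n₂} e^{−πi(n₁s − m₁t + n₂x − m₂y)} g₃(s,t,x,y). Define F̂(u,s,t,x,y) = (u, s+t+u−y), π̂₁(u,s,t,x,y) = (s+x, t+u, x+u, y−t−u), and π̂₂(u,s,t,x,y) = (s,t,x,y). Then the function p ↦ g₁(F̂(p)) · g₂(π̂₁(p)) · g₃(π̂₂(p)) on ℝ⁵ is invariant under translation by every vector of ℤ⁵; that is, there is a natural isomorphism F*L ⊗ π̃₁*(L⊠L) ≅ π̃₂*(L⊠L) of line bundles over the torus (ℝ/ℤ)⁵. -/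
import Mathlib


open Complex

/-- If `g₁` is quasi-periodic with multiplier
`φ((m,n),(x,y)) = (−1)^{mn} e^{πi(nx−my)}` (a section of `L`), `g₂` is doubly
quasi-periodic (a section of `L⊠L`), and `g₃` satisfies the conjugate relation
(a section of `L*⊠L*`), then the product
`p ↦ g₁(F̂(p)) · g₂(π̂₁(p)) · g₃(π̂₂(p))` on `ℝ⁵`, where
`F̂(u,s,t,x,y) = (u, s+t+u−y)`, `π̂₁(u,s,t,x,y) = (s+x, t+u, x+u, y−t−u)`, and
`π̂₂(u,s,t,x,y) = (s,t,x,y)`, is invariant under translations by `ℤ⁵`; that is,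
`F*L ⊗ π̃₁*(L⊠L) ≅ π̃₂*(L⊠L)` over the torus `(ℝ/ℤ)⁵`. -/
theorem line_bundle_isomorphism_over_five_torus
    (g₁ : ℝ → ℝ → ℂ) (g₂ g₃ : ℝ → ℝ → ℝ → ℝ → ℂ)
    (h₁ : ∀ (m n : ℤ) (x y : ℝ),
      g₁ (x + m) (y + n) =
        (-1 : ℂ) ^ (m * n) *
          Complex.exp (Real.pi * Complex.I * ((n : ℂ) * (x : ℂ) - (m : ℂ) * (y : ℂ))) *
          g₁ x y)
    (h₂ : ∀ (m₁ n₁ m₂ n₂ : ℤ) (s t x y : ℝ),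
      g₂ (s + m₁) (t + n₁) (x + m₂) (y + n₂) =
        (-1 : ℂ) ^ (m₁ * n₁ + m₂ * n₂) *
          Complex.exp (Real.pi * Complex.I *
            ((n₁ : ℂ) * (s : ℂ) - (m₁ : ℂ) * (t : ℂ) +
             (n₂ : ℂ) * (x : ℂ) - (m₂ : ℂ) * (y : ℂ))) *
          g₂ s t x y)
    (h₃ : ∀ (m₁ n₁ m₂ n₂ : ℤ) (s t x y : ℝ),
      g₃ (s + m₁) (t + n₁) (x + m₂) (y + n₂) =
        (-1 : ℂ) ^ (m₁ * n₁ + m₂ * n₂) *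
          Complex.exp (-(Real.pi * Complex.I *
            ((n₁ : ℂ) * (s : ℂ) - (m₁ : ℂ) * (t : ℂ) +
             (n₂ : ℂ) * (x : ℂ) - (m₂ : ℂ) * (y : ℂ)))) *
          g₃ s t x y) :
    ∀ (k₁ k₂ k₃ k₄ k₅ : ℤ) (u s t x y : ℝ),
      g₁ (u + k₁) ((s + k₂) + (t + k₃) + (u + k₁) - (y + k₅)) *
        g₂ ((s + k₂) + (x + k₄)) ((t + k₃) + (u + k₁)) ((x + k₄) + (u + k₁))
          ((y + k₅) - (t + k₃) - (u + k₁)) *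
        g₃ (s + k₂) (t + k₃) (x + k₄) (y + k₅) =
      g₁ u (s + t + u - y) *
        g₂ (s + x) (t + u) (x + u) (y - t - u) *
        g₃ s t x y := by
  intro k₁ k₂ k₃ k₄ k₅ u s t x y
  have a1 : (s + (k₂:ℝ)) + (t + (k₃:ℝ)) + (u + (k₁:ℝ)) - (y + (k₅:ℝ)) =
      (s + t + u - y) + ((k₂ + k₃ + k₁ - k₅ : ℤ) : ℝ) := by push_cast; ring
  have a2 : (s + (k₂:ℝ)) + (x + (k₄:ℝ)) = (s + x) + ((k₂ + k₄ : ℤ) : ℝ) := by push_cast; ring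
  have a3 : (t + (k₃:ℝ)) + (u + (k₁:ℝ)) = (t + u) + ((k₃ + k₁ : ℤ) : ℝ) := by push_cast; ring
  have a4 : (x + (k₄:ℝ)) + (u + (k₁:ℝ)) = (x + u) + ((k₄ + k₁ : ℤ) : ℝ) := by push_cast; ring
  have a5 : (y + (k₅:ℝ)) - (t + (k₃:ℝ)) - (u + (k₁:ℝ)) = (y - t - u) + ((k₅ - k₃ - k₁ : ℤ) : ℝ) := by
    push_cast; ring
  rw [a1, a2, a3, a4, a5, h₁ k₁ (k₂ + k₃ + k₁ - k₅),
    h₂ (k₂ + k₄) (k₃ + k₁) (k₄ + k₁) (k₅ - k₃ - k₁), h₃ k₂ k₃ k₄ k₅]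
  have hsign : ((-1 : ℂ) ^ (k₁ * (k₂ + k₃ + k₁ - k₅)) *
      (-1 : ℂ) ^ ((k₂ + k₄) * (k₃ + k₁) + (k₄ + k₁) * (k₅ - k₃ - k₁)) *
      (-1 : ℂ) ^ (k₂ * k₃ + k₄ * k₅) : ℂ) = 1 := by
    rw [← zpow_add₀ (by norm_num : (-1:ℂ) ≠ 0), ← zpow_add₀ (by norm_num : (-1:ℂ) ≠ 0)]
    have : k₁ * (k₂ + k₃ + k₁ - k₅) + ((k₂ + k₄) * (k₃ + k₁) + (k₄ + k₁) * (k₅ - k₃ - k₁)) +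
        (k₂ * k₃ + k₄ * k₅) = 2 * (k₁ * k₂ + k₂ * k₃ + k₄ * k₅) := by ring
    rw [this, zpow_mul]
    norm_num
  have hexp : Complex.exp ((Real.pi:ℂ) * Complex.I *
        (((k₂ + k₃ + k₁ - k₅ : ℤ) : ℂ) * (u : ℂ) - ((k₁ : ℤ) : ℂ) * ((s + t + u - y : ℝ) : ℂ))) *
      Complex.exp ((Real.pi:ℂ) * Complex.I *
        (((k₃ + k₁ : ℤ) : ℂ) * ((s + x : ℝ) : ℂ) - ((k₂ + k₄ : ℤ) : ℂ) * ((t + u : ℝ) : ℂ) +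
         ((k₅ - k₃ - k₁ : ℤ) : ℂ) * ((x + u : ℝ) : ℂ) -
         ((k₄ + k₁ : ℤ) : ℂ) * ((y - t - u : ℝ) : ℂ))) *
      Complex.exp (-((Real.pi:ℂ) * Complex.I *
        (((k₃ : ℤ) : ℂ) * (s : ℂ) - ((k₂ : ℤ) : ℂ) * (t : ℂ) +
         ((k₅ : ℤ) : ℂ) * (x : ℂ) - ((k₄ : ℤ) : ℂ) * (y : ℂ)))) = 1 := by
    rw [← Complex.exp_add, ← Complex.exp_add, ← Complex.exp_zero]
    congr 1
    push_cast
    ring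
  linear_combination ((Complex.exp ((Real.pi:ℂ) * Complex.I *
        (((k₂ + k₃ + k₁ - k₅ : ℤ) : ℂ) * (u : ℂ) - ((k₁ : ℤ) : ℂ) * ((s + t + u - y : ℝ) : ℂ))) *
      Complex.exp ((Real.pi:ℂ) * Complex.I *
        (((k₃ + k₁ : ℤ) : ℂ) * ((s + x : ℝ) : ℂ) - ((k₂ + k₄ : ℤ) : ℂ) * ((t + u : ℝ) : ℂ) +
         ((k₅ - k₃ - k₁ : ℤ) : ℂ) * ((x + u : ℝ) : ℂ) -
         ((k₄ + k₁ : ℤ) : ℂ) * ((y - t - u : ℝ) : ℂ))) *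
      Complex.exp (-((Real.pi:ℂ) * Complex.I *
        (((k₃ : ℤ) : ℂ) * (s : ℂ) - ((k₂ : ℤ) : ℂ) * (t : ℂ) +
         ((k₅ : ℤ) : ℂ) * (x : ℂ) - ((k₄ : ℤ) : ℂ) * (y : ℂ))))) * (g₁ u (s + t + u - y) * g₂ (s + x) (t + u) (x + u) (y - t - u) * g₃ s t x y)) * hsign + (g₁ u (s + t + u - y) * g₂ (s + x) (t + u) (x + u) (y - t - u) * g₃ s t x y) * hexp
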